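/- arXiv:1810.05780 — 2 statements merged into one kernel-verified Lean document; each statement's English description precedes it below -/
import Mathlib

section
/- Let u and v be non-collinear unit vectors in ℝ³. The subgroup of SO(3) generated by all rotations about u together with all rotations about v acts transitively on the unit sphere. -/
set_option maxRecDepth 8000
open Real


/-- Rotation of ℝ³ by angle `φ` about the axis through the origin in direction `u`
(Rodrigues' formula; when `‖u‖ = 1` this is the usual rotation `R_u(φ)`). -/
noncomputable def rot (u : EuclideanSpace ℝ (Fin 3)) (φ : ℝ) (x : EuclideanSpace ℝ (Fin 3)) :
    EuclideanSpace ℝ (Fin 3) :=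
  let c : EuclideanSpace ℝ (Fin 3) := WithLp.toLp 2 (crossProduct u x)
  Real.cos φ • x + Real.sin φ • c + ((1 - Real.cos φ) * (inner ℝ u x : ℝ)) • u

/-- SO(3): the subgroup of the orthogonal group of 3×3 real matrices consisting of
matrices of determinant 1 (acting on ℝ³ by matrix-vector multiplication). -/
def SO3 : Subgroup (Matrix.orthogonalGroup (Fin 3) ℝ) where
  carrier := {A | (A : Matrix (Fin 3) (Fin 3) ℝ).det = 1}
  one_mem' := by simp
  mul_mem' := by
    intro a b ha hb
    simp only [Set.mem_setOf_eq] at *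
    rw [Submonoid.coe_mul, Matrix.det_mul, ha, hb, one_mul]
  inv_mem' := by
    intro a ha
    simp only [Set.mem_setOf_eq] at *
    have h : ((a⁻¹ : Matrix.orthogonalGroup (Fin 3) ℝ) : Matrix (Fin 3) (Fin 3) ℝ) =
        star (a : Matrix (Fin 3) (Fin 3) ℝ) := rfl
    rw [h, Matrix.star_eq_conjTranspose, Matrix.det_conjTranspose, ha, star_one]


namespace TwoAxes
abbrev E := EuclideanSpace ℝ (Fin 3)

lemma inner3 (x y : E) : (inner ℝ x y : ℝ) = x 0 * y 0 + x 1 * y 1 + x 2 * y 2 := by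
  simp [PiLp.inner_apply, Fin.sum_univ_three, RCLike.inner_apply]; ring

lemma cross0 (u x : E) : (crossProduct u x) 0 = u 1 * x 2 - u 2 * x 1 := by simp [crossProduct]
lemma cross1 (u x : E) : (crossProduct u x) 1 = u 2 * x 0 - u 0 * x 2 := by simp [crossProduct]
lemma cross2 (u x : E) : (crossProduct u x) 2 = u 0 * x 1 - u 1 * x 0 := by simp [crossProduct]

lemma rot_apply (u : E) (φ : ℝ) (x : E) (i : Fin 3) :
    rot u φ x i = Real.cos φ * x i + Real.sin φ * (crossProduct u x) i
      + ((1 - Real.cos φ) * (inner ℝ u x : ℝ)) * u i := rfl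

lemma norm_one_sq {x : E} (hx : ‖x‖ = 1) : x 0 ^ 2 + x 1 ^ 2 + x 2 ^ 2 = 1 := by
  have h := real_inner_self_eq_norm_sq x
  rw [inner3, hx] at h
  nlinarith [h]

lemma rot_inner {b : E} (hb : ‖b‖ = 1) (φ : ℝ) (x y : E) :
    (inner ℝ (rot b φ x) (rot b φ y) : ℝ) = inner ℝ x y := by
  have hB := norm_one_sq hb
  have hp := Real.sin_sq_add_cos_sq φ
  simp only [inner3, rot_apply, cross0, cross1, cross2]
  set c := Real.cos φ
  set s := Real.sin φ
  linear_combination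
    ((x 0 * y 0 + x 1 * y 1 + x 2 * y 2) -
      (b 0 * x 0 + b 1 * x 1 + b 2 * x 2) * (b 0 * y 0 + b 1 * y 1 + b 2 * y 2)) * hp +
    (s^2 * (x 0 * y 0 + x 1 * y 1 + x 2 * y 2) +
      (1-c)^2 * (b 0 * x 0 + b 1 * x 1 + b 2 * x 2) * (b 0 * y 0 + b 1 * y 1 + b 2 * y 2)) * hB

lemma norm_one_of_inner_self {x : E} (h : (inner ℝ x x : ℝ) = 1) : ‖x‖ = 1 := by
  have := real_inner_self_eq_norm_sq x
  rw [h] at this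
  nlinarith [norm_nonneg x]

lemma rot_norm {b : E} (hb : ‖b‖ = 1) (φ : ℝ) {x : E} (hx : ‖x‖ = 1) : ‖rot b φ x‖ = 1 := by
  apply norm_one_of_inner_self
  rw [rot_inner hb, real_inner_self_eq_norm_sq, hx]; norm_num

lemma exists_cos_sin {p σ : ℝ} (h : p ^ 2 + σ ^ 2 = 1) : ∃ φ, Real.cos φ = p ∧ Real.sin φ = σ := by
  set z : ℂ := ⟨p, σ⟩ with hz
  have habs : ‖z‖ = 1 := by
    rw [Complex.norm_def, Complex.normSq_apply]
    simp only [hz]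
    rw [show p * p + σ * σ = 1 by nlinarith]
    exact Real.sqrt_one
  have hz0 : z ≠ 0 := by
    intro h0; rw [h0] at habs; simp at habs
  refine ⟨Complex.arg z, ?_, ?_⟩
  · rw [Complex.cos_arg hz0, habs]; simp [hz]
  · rw [Complex.sin_arg, habs]; simp [hz]

-- unconditional Gram identity for the triple product
lemma gram (n b x : E) :
    (inner ℝ n (WithLp.toLp 2 (crossProduct b x)) : ℝ) ^ 2 =
      (inner ℝ n n : ℝ) * (inner ℝ b b : ℝ) * (inner ℝ x x : ℝ)
      + 2 * (inner ℝ n b : ℝ) * (inner ℝ b x : ℝ) * (inner ℝ n x : ℝ)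
      - (inner ℝ n b : ℝ) ^ 2 * (inner ℝ x x : ℝ)
      - (inner ℝ b x : ℝ) ^ 2 * (inner ℝ n n : ℝ)
      - (inner ℝ n x : ℝ) ^ 2 * (inner ℝ b b : ℝ) := by
  simp only [inner3, cross0, cross1, cross2, WithLp.ofLp_toLp]; ring

lemma inner_rot (n b : E) (φ : ℝ) (x : E) :
    (inner ℝ n (rot b φ x) : ℝ) = Real.cos φ * (inner ℝ n x : ℝ)
      + Real.sin φ * (inner ℝ n (WithLp.toLp 2 (crossProduct b x)) : ℝ)
      + (1 - Real.cos φ) * (inner ℝ b x : ℝ) * (inner ℝ n b : ℝ) := by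
  simp only [inner3, rot_apply, cross0, cross1, cross2, WithLp.ofLp_toLp]; ring

/-- Lemma D: reachable latitudes by one rotation. -/
lemma reach_lat {n b x : E} (hn : ‖n‖ = 1) (hb : ‖b‖ = 1) (hx : ‖x‖ = 1) {c : ℝ}
    (hc : |c - (inner ℝ n b : ℝ) * (inner ℝ b x : ℝ)|
        ≤ Real.sqrt ((1 - (inner ℝ n b : ℝ) ^ 2) * (1 - (inner ℝ b x : ℝ) ^ 2))) :
    ∃ φ, (inner ℝ n (rot b φ x) : ℝ) = c := by
  set a : ℝ := inner ℝ n b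
  set w : ℝ := inner ℝ b x
  set t : ℝ := inner ℝ n x
  set q : ℝ := inner ℝ n (WithLp.toLp 2 (crossProduct b x)) with hqdef
  have hnn : (inner ℝ n n : ℝ) = 1 := by rw [real_inner_self_eq_norm_sq, hn]; norm_num
  have hbb : (inner ℝ b b : ℝ) = 1 := by rw [real_inner_self_eq_norm_sq, hb]; norm_num
  have hxx : (inner ℝ x x : ℝ) = 1 := by rw [real_inner_self_eq_norm_sq, hx]; norm_num
  have hq : q ^ 2 = 1 + 2 * a * w * t - a ^ 2 - w ^ 2 - t ^ 2 := by
    have := gram n b x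
    rw [hnn, hbb, hxx] at this
    rw [hqdef, this]; ring
  have hr : (t - a * w) ^ 2 + q ^ 2 = (1 - a ^ 2) * (1 - w ^ 2) := by
    rw [hq]; ring
  have hrnn : (0:ℝ) ≤ (1 - a ^ 2) * (1 - w ^ 2) := by
    rw [← hr]; positivity
  set d : ℝ := c - a * w with hd
  have hd2 : d ^ 2 ≤ (t - a * w) ^ 2 + q ^ 2 := by
    rw [hr]
    calc d ^ 2 = |d| ^ 2 := by rw [sq_abs]
    _ ≤ Real.sqrt ((1 - a ^ 2) * (1 - w ^ 2)) ^ 2 := by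
        apply pow_le_pow_left₀ (abs_nonneg d) hc
    _ = (1 - a ^ 2) * (1 - w ^ 2) := Real.sq_sqrt hrnn
  rcases eq_or_lt_of_le (by positivity : (0:ℝ) ≤ (t - a*w)^2 + q^2) with hr0 | hr0
  · -- degenerate: radius zero
    have ht : t = a * w := by nlinarith [sq_nonneg (t - a*w), sq_nonneg q]
    have hdz : d = 0 := by nlinarith [sq_nonneg d]
    refine ⟨0, ?_⟩
    rw [inner_rot]
    simp only [Real.cos_zero, Real.sin_zero]
    rw [show (inner ℝ n x : ℝ) = t from rfl]
    rw [ht]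
    have : c = a * w := by rw [hd] at hdz; linarith
    rw [this]; ring
  · set r2 : ℝ := (t - a*w)^2 + q^2 with hr2
    have hr2ne : r2 ≠ 0 := ne_of_gt hr0
    set e : ℝ := Real.sqrt (r2 - d^2) with he
    have he2 : e ^ 2 = r2 - d ^ 2 := Real.sq_sqrt (by linarith)
    set p : ℝ := ((t - a*w) * d + q * e) / r2 with hp
    set σ : ℝ := (q * d - (t - a*w) * e) / r2 with hσ
    have hps : p ^ 2 + σ ^ 2 = 1 := by
      rw [hp, hσ, div_pow, div_pow, ← add_div]
      rw [show ((t - a*w) * d + q * e)^2 + (q * d - (t - a*w) * e)^2 = r2*(d^2+e^2) by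
        linear_combination (d^2+e^2)*hr2]
      rw [show d^2 + e^2 = r2 by linarith [he2]]
      rw [show r2 * r2 = r2^2 by ring]
      exact div_self (pow_ne_zero 2 hr2ne)
    obtain ⟨φ, hcos, hsin⟩ := exists_cos_sin hps
    refine ⟨φ, ?_⟩
    rw [inner_rot, hcos, hsin]
    rw [show (inner ℝ n x : ℝ) = t from rfl, show (inner ℝ b x : ℝ) = w from rfl,
        show (inner ℝ n b : ℝ) = a from rfl, ← hqdef]
    have hfe : p * (t - a*w) + σ * q = d := by
      rw [hp, hσ, div_mul_eq_mul_div, div_mul_eq_mul_div, ← add_div]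
      rw [show ((t - a*w) * d + q * e) * (t - a*w) + (q * d - (t - a*w) * e) * q = r2 * d by
        linear_combination d * hr2]
      exact mul_div_cancel_left₀ d hr2ne
    linear_combination hfe + hd

def cp (a b : E) : E := WithLp.toLp 2 (crossProduct a b)

lemma cp0 (u x : E) : (cp u x) 0 = u 1 * x 2 - u 2 * x 1 := by simp [cp, crossProduct]
lemma cp1 (u x : E) : (cp u x) 1 = u 2 * x 0 - u 0 * x 2 := by simp [cp, crossProduct]
lemma cp2 (u x : E) : (cp u x) 2 = u 0 * x 1 - u 1 * x 0 := by simp [cp, crossProduct]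

lemma rot_apply' (u : E) (φ : ℝ) (x : E) (i : Fin 3) :
    rot u φ x i = Real.cos φ * x i + Real.sin φ * (cp u x) i
      + ((1 - Real.cos φ) * (inner ℝ u x : ℝ)) * u i := rfl

lemma inner_self_one {x : E} (hx : ‖x‖ = 1) : (inner ℝ x x : ℝ) = 1 := by
  rw [real_inner_self_eq_norm_sq, hx]; norm_num

lemma eq_of_inner_eq_one {u x : E} (hu : ‖u‖ = 1) (hx : ‖x‖ = 1)
    (h : (inner ℝ u x : ℝ) = 1) : x = u := by
  have hc : (inner ℝ x u : ℝ) = inner ℝ u x := real_inner_comm u x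
  have h2 : (inner ℝ (x - u) (x - u) : ℝ) = 0 := by
    rw [inner_sub_left, inner_sub_right, inner_sub_right]
    linarith [hc, h, inner_self_one hx, inner_self_one hu]
  have h3 := inner_self_eq_zero.mp
    ((by exact_mod_cast h2) : (inner ℝ (x - u) (x - u) : ℝ) = 0)
  rwa [sub_eq_zero] at h3

noncomputable def rotMat (u : E) (φ : ℝ) : Matrix (Fin 3) (Fin 3) ℝ :=
  let c := Real.cos φ; let s := Real.sin φ
  Matrix.of ![![c + (1-c)*u 0*u 0, -s*u 2 + (1-c)*u 0*u 1, s*u 1 + (1-c)*u 0*u 2],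
    ![s*u 2 + (1-c)*u 1*u 0, c + (1-c)*u 1*u 1, -s*u 0 + (1-c)*u 1*u 2],
    ![-s*u 1 + (1-c)*u 2*u 0, s*u 0 + (1-c)*u 2*u 1, c + (1-c)*u 2*u 2]]

lemma rotMat_mulVec (u : E) (φ : ℝ) (z : E) : (rotMat u φ).mulVec z = rot u φ z := by
  funext i
  have h3 : i = 0 ∨ i = 1 ∨ i = 2 := by revert i; decide
  rcases h3 with h | h | h <;> subst h <;>
    simp only [rotMat, Matrix.mulVec, dotProduct, Fin.sum_univ_three, rot_apply', inner3,
      cp0, cp1, cp2, Matrix.of_apply, Matrix.cons_val', Matrix.cons_val_zero, Matrix.cons_val_one,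
      Matrix.head_cons, Matrix.empty_val', Matrix.cons_val_fin_one, Matrix.head_fin_const,
      Matrix.cons_val_two, Matrix.tail_cons] <;>
    ring

lemma rotMat_mem {u : E} (hu : ‖u‖ = 1) (φ : ℝ) :
    rotMat u φ ∈ Matrix.orthogonalGroup (Fin 3) ℝ := by
  rw [Matrix.mem_orthogonalGroup_iff]
  have hB := norm_one_sq hu
  have hp := Real.sin_sq_add_cos_sq φ
  set c := Real.cos φ
  set s := Real.sin φ
  ext i j
  have h3 : i = 0 ∨ i = 1 ∨ i = 2 := by revert i; decide
  have h3' : j = 0 ∨ j = 1 ∨ j = 2 := by revert j; decide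
  rcases h3 with h | h | h <;> subst h <;> rcases h3' with h | h | h <;> subst h <;>
    simp only [rotMat, Matrix.mul_apply, Matrix.star_apply, star_trivial, Fin.sum_univ_three,
      Matrix.of_apply, Matrix.cons_val', Matrix.cons_val_zero, Matrix.cons_val_one,
      Matrix.head_cons, Matrix.empty_val', Matrix.cons_val_fin_one, Matrix.head_fin_const,
      Matrix.cons_val_two, Matrix.tail_cons, Matrix.one_apply, Fin.reduceEq, reduceIte,
      Matrix.transpose_apply]
  · linear_combination (1 + u 0^2 + -2*c*u 0^2 + -1*c^2 + c^2*u 0^2) * hB + (u 2^2 + u 1^2) * hp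
  · linear_combination (u 0*u 1 + -2*c*u 0*u 1 + c^2*u 0*u 1) * hB + (-1*u 0*u 1) * hp
  · linear_combination (u 0*u 2 + -2*c*u 0*u 2 + c^2*u 0*u 2) * hB + (-1*u 0*u 2) * hp
  · linear_combination (u 0*u 1 + -2*c*u 0*u 1 + c^2*u 0*u 1) * hB + (-1*u 0*u 1) * hp
  · linear_combination (1 + u 1^2 + -2*c*u 1^2 + -1*c^2 + c^2*u 1^2) * hB + (u 2^2 + u 0^2) * hp
  · linear_combination (u 1*u 2 + -2*c*u 1*u 2 + c^2*u 1*u 2) * hB + (-1*u 1*u 2) * hp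
  · linear_combination (u 0*u 2 + -2*c*u 0*u 2 + c^2*u 0*u 2) * hB + (-1*u 0*u 2) * hp
  · linear_combination (u 1*u 2 + -2*c*u 1*u 2 + c^2*u 1*u 2) * hB + (-1*u 1*u 2) * hp
  · linear_combination (1 + u 2^2 + -2*c*u 2^2 + -1*c^2 + c^2*u 2^2) * hB + (u 1^2 + u 0^2) * hp

lemma rotMat_det {u : E} (hu : ‖u‖ = 1) (φ : ℝ) : (rotMat u φ).det = 1 := by
  have hB := norm_one_sq hu
  have hp := Real.sin_sq_add_cos_sq φ
  set c := Real.cos φ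
  set s := Real.sin φ
  rw [Matrix.det_fin_three]
  simp only [rotMat, Matrix.of_apply, Matrix.cons_val', Matrix.cons_val_zero, Matrix.cons_val_one,
    Matrix.head_cons, Matrix.empty_val', Matrix.cons_val_fin_one, Matrix.head_fin_const,
    Matrix.cons_val_two, Matrix.tail_cons]
  linear_combination (1 + u 2^2 + u 1^2 + u 0^2 + -1*c*u 2^2 + -1*c*u 1^2 + -1*c*u 0^2
      + -1*c^2*u 2^2 + -1*c^2*u 1^2 + -1*c^2*u 0^2 + -1*c^3 + c^3*u 2^2 + c^3*u 1^2
      + c^3*u 0^2) * hB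
    + (u 2^4 + 2*u 1^2*u 2^2 + u 1^4 + 2*u 0^2*u 2^2 + 2*u 0^2*u 1^2 + u 0^4 + c*u 2^2
      + -1*c*u 2^4 + c*u 1^2 + -2*c*u 1^2*u 2^2 + -1*c*u 1^4 + c*u 0^2 + -2*c*u 0^2*u 2^2
      + -2*c*u 0^2*u 1^2 + -1*c*u 0^4) * hp

/-! group plumbing -/

def gens (u v : E) : Set SO3 :=
  {R : SO3 | ∃ φ : ℝ, ∀ z, R.1.1.mulVec z = rot u φ (WithLp.toLp 2 z)} ∪
  {R : SO3 | ∃ φ : ℝ, ∀ z, R.1.1.mulVec z = rot v φ (WithLp.toLp 2 z)}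

def Reach (u v x y : E) : Prop :=
  ∃ R ∈ Subgroup.closure (gens u v), R.1.1.mulVec x = y

lemma reach_trans {u v x y z : E} (h1 : Reach u v x y) (h2 : Reach u v y z) :
    Reach u v x z := by
  obtain ⟨R1, hR1, e1⟩ := h1
  obtain ⟨R2, hR2, e2⟩ := h2
  refine ⟨R2 * R1, mul_mem hR2 hR1, ?_⟩
  have hco : ((R2 * R1 : SO3) : Matrix.orthogonalGroup (Fin 3) ℝ).1
      = R2.1.1 * R1.1.1 := rfl
  rw [hco, ← Matrix.mulVec_mulVec, e1, e2]

lemma reach_symm {u v x y : E} (h : Reach u v x y) : Reach u v y x := by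
  obtain ⟨R, hR, e⟩ := h
  refine ⟨R⁻¹, inv_mem hR, ?_⟩
  have hco : ((R⁻¹ : SO3) : Matrix.orthogonalGroup (Fin 3) ℝ).1 = star R.1.1 := rfl
  rw [hco, ← e, Matrix.mulVec_mulVec, R.1.2.1, Matrix.one_mulVec]

noncomputable def rotSO3 {u : E} (hu : ‖u‖ = 1) (φ : ℝ) : SO3 :=
  ⟨⟨rotMat u φ, rotMat_mem hu φ⟩, rotMat_det hu φ⟩

lemma reach_rot_u {u v : E} (hu : ‖u‖ = 1) (φ : ℝ) (x : E) : Reach u v x (rot u φ x) :=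
  ⟨rotSO3 hu φ, Subgroup.subset_closure (Or.inl ⟨φ, fun z => rotMat_mulVec u φ (WithLp.toLp 2 z)⟩),
    rotMat_mulVec u φ x⟩

lemma reach_rot_v {u v : E} (hv : ‖v‖ = 1) (φ : ℝ) (x : E) : Reach u v x (rot v φ x) :=
  ⟨rotSO3 hv φ, Subgroup.subset_closure (Or.inr ⟨φ, fun z => rotMat_mulVec v φ (WithLp.toLp 2 z)⟩),
    rotMat_mulVec v φ x⟩

lemma rot_neg (v : E) (φ : ℝ) (z : E) : rot (-v) φ z = rot v (-φ) z := by
  ext i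
  have hn : ∀ j, (-v : E) j = -(v j) := fun j => rfl
  have h3 : i = 0 ∨ i = 1 ∨ i = 2 := by revert i; decide
  rcases h3 with h | h | h <;> subst h <;>
    simp only [rot_apply', cp0, cp1, cp2, inner3, hn, Real.cos_neg, Real.sin_neg] <;> ring

lemma gens_neg (u v : E) : gens u (-v) = gens u v := by
  unfold gens
  congr 1
  ext R
  simp only [Set.mem_setOf_eq]
  constructor
  · rintro ⟨φ, h⟩
    exact ⟨-φ, fun z => (h z).trans (congrArg WithLp.ofLp (rot_neg v φ _))⟩
  · rintro ⟨φ, h⟩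
    refine ⟨-φ, fun z => (h z).trans ?_⟩
    rw [rot_neg, neg_neg]

/-! trig inequalities -/

lemma trig1 {β θ : ℝ} (hβ0 : 0 ≤ β) (hβ2 : β ≤ π/2) (hθ0 : 0 ≤ θ) (hβθ : θ ≤ 2*β) :
    |Real.cos β - Real.cos β * Real.cos θ| ≤ Real.sin β * Real.sin θ := by
  have hπ := Real.pi_pos
  have hs := Real.sin_sub β (θ/2)
  have h1 : 0 ≤ Real.sin (β - θ/2) :=
    Real.sin_nonneg_of_nonneg_of_le_pi (by linarith) (by linarith)
  have h2 : 0 ≤ Real.sin (θ/2) :=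
    Real.sin_nonneg_of_nonneg_of_le_pi (by linarith) (by linarith)
  have hcc := Real.cos_two_mul (θ/2)
  have hss := Real.sin_sq_add_cos_sq (θ/2)
  rw [show 2*(θ/2) = θ by ring] at hcc
  have hsθ : Real.sin θ = 2 * Real.sin (θ/2) * Real.cos (θ/2) := by
    conv_lhs => rw [show θ = 2*(θ/2) by ring]
    exact Real.sin_two_mul _
  have hcβ : 0 ≤ Real.cos β := Real.cos_nonneg_of_mem_Icc ⟨by linarith, hβ2⟩
  have hct : Real.cos θ ≤ 1 := Real.cos_le_one θ
  have habs : |Real.cos β - Real.cos β * Real.cos θ| = Real.cos β * (1 - Real.cos θ) := by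
    rw [abs_of_nonneg (by nlinarith)]; ring
  rw [habs, hsθ]
  have key : 0 ≤ Real.sin (θ/2) * (Real.sin β * Real.cos (θ/2) - Real.cos β * Real.sin (θ/2)) :=
    mul_nonneg h2 (by rw [← hs]; exact h1)
  nlinarith [key, hcc, hss]

lemma trig2 {β ψ : ℝ} (hψ0 : 0 ≤ ψ) (hψπ : ψ ≤ π) (hβ0 : 0 ≤ β) (hβπ : β ≤ π) :
    |Real.cos (ψ - β) - Real.cos β * Real.cos ψ| ≤ Real.sin β * Real.sin ψ := by
  rw [Real.cos_sub]
  have h1 : 0 ≤ Real.sin ψ := Real.sin_nonneg_of_nonneg_of_le_pi hψ0 hψπ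
  have h2 : 0 ≤ Real.sin β := Real.sin_nonneg_of_nonneg_of_le_pi hβ0 hβπ
  rw [show Real.cos ψ * Real.cos β + Real.sin ψ * Real.sin β - Real.cos β * Real.cos ψ
    = Real.sin ψ * Real.sin β by ring, abs_of_nonneg (mul_nonneg h1 h2)]
  linarith [mul_nonneg h1 h2]

/-! latitude bookkeeping -/

lemma inner_bounds {u x : E} (hu : ‖u‖ = 1) (hx : ‖x‖ = 1) :
    -1 ≤ (inner ℝ u x : ℝ) ∧ (inner ℝ u x : ℝ) ≤ 1 := by
  have h := abs_real_inner_le_norm u x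
  rw [hu, hx] at h
  rw [abs_le] at h
  simpa using h

lemma sqrt_to_sin {a t : ℝ} (ha : a^2 ≤ 1) : Real.sqrt ((1 - a^2) * (1 - t^2))
    = Real.sqrt (1 - a^2) * Real.sqrt (1 - t^2) :=
  Real.sqrt_mul (by linarith) _

lemma inner_lt_one {u w : E} (hu : ‖u‖ = 1) (hw : ‖w‖ = 1) (hne : w ≠ u) :
    (inner ℝ u w : ℝ) < 1 := by
  rcases lt_or_eq_of_le (inner_bounds hu hw).2 with h | h
  · exact h
  · exact absurd (eq_of_inner_eq_one hu hw h) hne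

/-! the two step lemmas -/

lemma reach_finish {u v : E} (hu : ‖u‖ = 1) (hv : ‖v‖ = 1)
    (ha0 : 0 ≤ (inner ℝ u v : ℝ)) (ha1 : (inner ℝ u v : ℝ) < 1)
    {x : E} (hx : ‖x‖ = 1)
    (hθ : Real.arccos (inner ℝ u x) ≤ 2 * Real.arccos (inner ℝ u v)) :
    Reach u v x u := by
  have hvu : (inner ℝ v u : ℝ) = inner ℝ u v := real_inner_comm u v
  have hb := inner_bounds hu hv
  have htb := inner_bounds hu hx
  have hcosβ : Real.cos (Real.arccos (inner ℝ u v : ℝ)) = inner ℝ u v :=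
    Real.cos_arccos hb.1 hb.2
  have hcosθ : Real.cos (Real.arccos (inner ℝ u x : ℝ)) = inner ℝ u x :=
    Real.cos_arccos htb.1 htb.2
  -- step 1: rotate about u to make ⟨v,·⟩ = ⟨u,v⟩
  have hcond1 : |(inner ℝ u v : ℝ) - (inner ℝ v u : ℝ) * (inner ℝ u x : ℝ)|
      ≤ Real.sqrt ((1 - (inner ℝ v u : ℝ)^2) * (1 - (inner ℝ u x : ℝ)^2)) := by
    rw [hvu, sqrt_to_sin (by nlinarith [hb.1, hb.2]), ← Real.sin_arccos, ← Real.sin_arccos]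
    have := trig1 (Real.arccos_nonneg (inner ℝ u v : ℝ))
      (Real.arccos_le_pi_div_two.mpr ha0) (Real.arccos_nonneg (inner ℝ u x : ℝ)) hθ
    rwa [hcosβ, hcosθ] at this
  obtain ⟨φ₁, h1⟩ := reach_lat hv hu hx hcond1
  have hx1 : ‖rot u φ₁ x‖ = 1 := rot_norm hu φ₁ hx
  -- step 2: rotate about v to land on u
  have hcond2 : |1 - (inner ℝ u v : ℝ) * (inner ℝ v (rot u φ₁ x) : ℝ)|
      ≤ Real.sqrt ((1 - (inner ℝ u v : ℝ)^2) * (1 - (inner ℝ v (rot u φ₁ x) : ℝ)^2)) := by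
    rw [h1, show (1 - (inner ℝ u v : ℝ)^2) * (1 - (inner ℝ u v : ℝ)^2)
        = (1 - (inner ℝ u v : ℝ)^2) * (1 - (inner ℝ u v : ℝ)^2) from rfl,
      Real.sqrt_mul_self (by nlinarith [hb.1, hb.2] : (0:ℝ) ≤ 1 - (inner ℝ u v : ℝ)^2),
      show (1:ℝ) - (inner ℝ u v : ℝ) * (inner ℝ u v : ℝ) = 1 - (inner ℝ u v : ℝ)^2 by ring,
      abs_of_nonneg (by nlinarith [hb.1, hb.2])]
  obtain ⟨φ₂, h2⟩ := reach_lat hu hv hx1 hcond2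
  have hx2 : ‖rot v φ₂ (rot u φ₁ x)‖ = 1 := rot_norm hv φ₂ hx1
  have hfinal : rot v φ₂ (rot u φ₁ x) = u := eq_of_inner_eq_one hu hx2 h2
  have r1 : Reach u v x (rot u φ₁ x) := reach_rot_u hu φ₁ x
  have r2 : Reach u v (rot u φ₁ x) (rot v φ₂ (rot u φ₁ x)) := reach_rot_v hv φ₂ _
  rw [hfinal] at r2
  exact reach_trans r1 r2

lemma reach_descend {u v : E} (hu : ‖u‖ = 1) (hv : ‖v‖ = 1)
    (ha0 : 0 ≤ (inner ℝ u v : ℝ)) (ha1 : (inner ℝ u v : ℝ) < 1)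
    {x : E} (hx : ‖x‖ = 1)
    (hθ : 2 * Real.arccos (inner ℝ u v) < Real.arccos (inner ℝ u x)) :
    ∃ x' : E, ‖x'‖ = 1 ∧ Reach u v x x' ∧
      Real.arccos (inner ℝ u x') = Real.arccos (inner ℝ u x) - 2 * Real.arccos (inner ℝ u v) := by
  have hπ := Real.pi_pos
  have hvu : (inner ℝ v u : ℝ) = inner ℝ u v := real_inner_comm u v
  have hb := inner_bounds hu hv
  have htb := inner_bounds hu hx
  have hcosβ : Real.cos (Real.arccos (inner ℝ u v : ℝ)) = inner ℝ u v :=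
    Real.cos_arccos hb.1 hb.2
  have hcosθ : Real.cos (Real.arccos (inner ℝ u x : ℝ)) = inner ℝ u x :=
    Real.cos_arccos htb.1 htb.2
  have hβ0 : 0 ≤ Real.arccos (inner ℝ u v : ℝ) := Real.arccos_nonneg _
  have hβπ : Real.arccos (inner ℝ u v : ℝ) ≤ π := Real.arccos_le_pi _
  have hθ0 : 0 ≤ Real.arccos (inner ℝ u x : ℝ) := Real.arccos_nonneg _
  have hθπ : Real.arccos (inner ℝ u x : ℝ) ≤ π := Real.arccos_le_pi _
  -- step 1: rotate about u to make ⟨v,·⟩ = cos (θ - β)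
  have hcond1 : |Real.cos (Real.arccos (inner ℝ u x : ℝ) - Real.arccos (inner ℝ u v : ℝ))
        - (inner ℝ v u : ℝ) * (inner ℝ u x : ℝ)|
      ≤ Real.sqrt ((1 - (inner ℝ v u : ℝ)^2) * (1 - (inner ℝ u x : ℝ)^2)) := by
    rw [hvu, sqrt_to_sin (by nlinarith [hb.1, hb.2]), ← Real.sin_arccos, ← Real.sin_arccos]
    have := trig2 hθ0 hθπ hβ0 hβπ
    rwa [hcosβ, hcosθ] at this
  obtain ⟨φ₁, h1⟩ := reach_lat hv hu hx hcond1
  have hx1 : ‖rot u φ₁ x‖ = 1 := rot_norm hu φ₁ hx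
  -- step 2: rotate about v to make ⟨u,·⟩ = cos (θ - 2β)
  have hψ0 : 0 ≤ Real.arccos (inner ℝ u x : ℝ) - Real.arccos (inner ℝ u v : ℝ) := by linarith
  have hψπ : Real.arccos (inner ℝ u x : ℝ) - Real.arccos (inner ℝ u v : ℝ) ≤ π := by linarith
  have hsinψ : 0 ≤ Real.sin (Real.arccos (inner ℝ u x : ℝ) - Real.arccos (inner ℝ u v : ℝ)) :=
    Real.sin_nonneg_of_nonneg_of_le_pi hψ0 hψπ
  have hcond2 : |Real.cos (Real.arccos (inner ℝ u x : ℝ) - Real.arccos (inner ℝ u v : ℝ)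
          - Real.arccos (inner ℝ u v : ℝ))
        - (inner ℝ u v : ℝ) * (inner ℝ v (rot u φ₁ x) : ℝ)|
      ≤ Real.sqrt ((1 - (inner ℝ u v : ℝ)^2) * (1 - (inner ℝ v (rot u φ₁ x) : ℝ)^2)) := by
    rw [h1, sqrt_to_sin (by nlinarith [hb.1, hb.2]), ← Real.sin_arccos,
      show (1:ℝ) - Real.cos (Real.arccos (inner ℝ u x : ℝ) - Real.arccos (inner ℝ u v : ℝ))^2
        = Real.sin (Real.arccos (inner ℝ u x : ℝ) - Real.arccos (inner ℝ u v : ℝ))^2 by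
          have := Real.sin_sq_add_cos_sq
            (Real.arccos (inner ℝ u x : ℝ) - Real.arccos (inner ℝ u v : ℝ))
          linarith,
      Real.sqrt_sq hsinψ]
    have := trig2 hψ0 hψπ hβ0 hβπ
    rwa [hcosβ] at this
  obtain ⟨φ₂, h2⟩ := reach_lat hu hv hx1 hcond2
  have hx2 : ‖rot v φ₂ (rot u φ₁ x)‖ = 1 := rot_norm hv φ₂ hx1
  refine ⟨rot v φ₂ (rot u φ₁ x), hx2,
    reach_trans (reach_rot_u hu φ₁ x) (reach_rot_v hv φ₂ _), ?_⟩
  rw [h2, show Real.arccos (inner ℝ u x : ℝ) - Real.arccos (inner ℝ u v : ℝ)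
      - Real.arccos (inner ℝ u v : ℝ)
    = Real.arccos (inner ℝ u x : ℝ) - 2 * Real.arccos (inner ℝ u v : ℝ) by ring]
  exact Real.arccos_cos (by linarith) (by linarith)

lemma reach_pole {u v : E} (hu : ‖u‖ = 1) (hv : ‖v‖ = 1)
    (ha0 : 0 ≤ (inner ℝ u v : ℝ)) (ha1 : (inner ℝ u v : ℝ) < 1)
    {x : E} (hx : ‖x‖ = 1) : Reach u v x u := by
  have hβ0 : 0 < Real.arccos (inner ℝ u v : ℝ) := Real.arccos_pos.mpr ha1
  have main : ∀ n : ℕ, ∀ x : E, ‖x‖ = 1 →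
      Real.arccos (inner ℝ u x : ℝ) ≤ (n + 1) * (2 * Real.arccos (inner ℝ u v : ℝ)) →
      Reach u v x u := by
    intro n
    induction n with
    | zero =>
      intro x hx h
      refine reach_finish hu hv ha0 ha1 hx ?_
      push_cast at h
      linarith
    | succ n ih =>
      intro x hx h
      rcases le_or_gt (Real.arccos (inner ℝ u x : ℝ)) (2 * Real.arccos (inner ℝ u v : ℝ))
        with hc | hc
      · exact reach_finish hu hv ha0 ha1 hx hc
      · obtain ⟨x', hx', hRx, harc⟩ := reach_descend hu hv ha0 ha1 hx hc
        refine reach_trans hRx (ih x' hx' ?_)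
        rw [harc]
        push_cast at h ⊢
        linarith
  obtain ⟨n, hn⟩ := exists_nat_ge (π / (2 * Real.arccos (inner ℝ u v : ℝ)))
  apply main n x hx
  have h2β : 0 < 2 * Real.arccos (inner ℝ u v : ℝ) := by linarith
  rw [div_le_iff₀ h2β] at hn
  have hθπ : Real.arccos (inner ℝ u x : ℝ) ≤ π := Real.arccos_le_pi _
  nlinarith [hn, hθπ, h2β]

lemma reach_all {u v : E} (hu : ‖u‖ = 1) (hv : ‖v‖ = 1) (hne : v ≠ u) (hne' : v ≠ -u)
    {x y : E} (hx : ‖x‖ = 1) (hy : ‖y‖ = 1) : Reach u v x y := by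
  rcases le_or_gt 0 (inner ℝ u v : ℝ) with h0 | h0
  · have ha1 := inner_lt_one hu hv hne
    exact reach_trans (reach_pole hu hv h0 ha1 hx) (reach_symm (reach_pole hu hv h0 ha1 hy))
  · have hv' : ‖(-v : E)‖ = 1 := by rw [norm_neg, hv]
    have hip : (inner ℝ u (-v : E) : ℝ) = -(inner ℝ u v : ℝ) := by
      rw [inner_neg_right]
    have ha0' : 0 ≤ (inner ℝ u (-v : E) : ℝ) := by rw [hip]; linarith
    have hne'' : (-v : E) ≠ u := fun h => hne' (by rw [← h]; simp)
    have ha1' := inner_lt_one hu hv' hne''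
    have hfin : Reach u (-v) x y :=
      reach_trans (reach_pole hu hv' ha0' ha1' hx)
        (reach_symm (reach_pole hu hv' ha0' ha1' hy))
    obtain ⟨R, hR, e⟩ := hfin
    rw [gens_neg] at hR
    exact ⟨R, hR, e⟩

end TwoAxes

/-- The subgroup of SO(3) generated by all rotations about two non-collinear unit axes
`u` and `v` acts transitively on the unit sphere. -/
theorem two_axes_subgroup_transitive (u v : EuclideanSpace ℝ (Fin 3))
    (hu : ‖u‖ = 1) (hv : ‖v‖ = 1) (hne : v ≠ u) (hne' : v ≠ -u) :
    ∀ x y : EuclideanSpace ℝ (Fin 3), ‖x‖ = 1 → ‖y‖ = 1 →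
      ∃ R ∈ Subgroup.closure
          ({R : SO3 | ∃ φ : ℝ, ∀ z, R.1.1.mulVec z = rot u φ (WithLp.toLp 2 z)} ∪
           {R : SO3 | ∃ φ : ℝ, ∀ z, R.1.1.mulVec z = rot v φ (WithLp.toLp 2 z)}),
        R.1.1.mulVec x = y := by
  intro x y hx hy
  exact TwoAxes.reach_all hu hv hne hne' hx hy
end

section
/- The subgroup of SO(3) generated by the set of all rotations about two non-collinear unit axes u and v is all of SO(3). -/
open Matrix Real

set_option maxHeartbeats 1000000

namespace SO3aux


/-- Rodrigues rotation on plain vectors. -/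
noncomputable def rotp (u : Fin 3 → ℝ) (φ : ℝ) (x : Fin 3 → ℝ) : Fin 3 → ℝ :=
  Real.cos φ • x + Real.sin φ • (u ⨯₃ x) + ((1 - Real.cos φ) * (u ⬝ᵥ x)) • u

lemma inner_eq_dot (x y : EuclideanSpace ℝ (Fin 3)) : (inner ℝ x y : ℝ) = (x : Fin 3 → ℝ) ⬝ᵥ (y : Fin 3 → ℝ) := by
  simp [PiLp.inner_apply, dotProduct, RCLike.inner_apply, mul_comm]

lemma cross_cross_self (u w : Fin 3 → ℝ) : u ⨯₃ (u ⨯₃ w) = (u ⬝ᵥ w) • u - (u ⬝ᵥ u) • w := by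
  funext i; fin_cases i <;> simp [cross_apply, dotProduct, Fin.sum_univ_three] <;> ring

lemma dot_cross_swap (u x y : Fin 3 → ℝ) : x ⬝ᵥ (u ⨯₃ y) = -((u ⨯₃ x) ⬝ᵥ y) := by
  simp [cross_apply, dotProduct, Fin.sum_univ_three]; ring

lemma dot_self_nonneg (x : Fin 3 → ℝ) : 0 ≤ x ⬝ᵥ x := by
  simp only [dotProduct, Fin.sum_univ_three]
  nlinarith [sq_nonneg (x 0), sq_nonneg (x 1), sq_nonneg (x 2)]

lemma rotp_dot (u : Fin 3 → ℝ) (hu : u ⬝ᵥ u = 1) (φ : ℝ) (x y : Fin 3 → ℝ) :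
    rotp u φ x ⬝ᵥ rotp u φ y = x ⬝ᵥ y := by
  have hx := dot_cross_swap u x y
  have hcc := cross_dot_cross u x u y
  have h1 : (u ⨯₃ x) ⬝ᵥ u = 0 := by rw [dotProduct_comm]; exact dot_self_cross u x
  have h2 : u ⬝ᵥ (u ⨯₃ y) = 0 := dot_self_cross u y
  have hpyth := sin_sq_add_cos_sq φ
  simp only [rotp, add_dotProduct, dotProduct_add, smul_dotProduct, dotProduct_smul,
    smul_eq_mul]
  rw [hcc, hx, h1, h2, dotProduct_comm u x]
  linear_combination (x ⬝ᵥ y * Real.sin φ^2 + x ⬝ᵥ u * (u ⬝ᵥ y) * (1 - Real.cos φ)^2) * hu +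
    (x ⬝ᵥ y - x ⬝ᵥ u * (u ⬝ᵥ y)) * hpyth

noncomputable def rotL (u : Fin 3 → ℝ) (φ : ℝ) : (Fin 3 → ℝ) →ₗ[ℝ] (Fin 3 → ℝ) where
  toFun := rotp u φ
  map_add' x y := by
    simp only [rotp, map_add, dotProduct_add]; module
  map_smul' a x := by
    simp only [rotp, _root_.map_smul, dotProduct_smul, RingHom.id_apply, smul_eq_mul]
    match_scalars <;> ring

noncomputable def rotM (u : Fin 3 → ℝ) (φ : ℝ) : Matrix (Fin 3) (Fin 3) ℝ :=
  LinearMap.toMatrix' (rotL u φ)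

lemma rotM_mulVec (u : Fin 3 → ℝ) (φ : ℝ) (z : Fin 3 → ℝ) :
    rotM u φ *ᵥ z = rotp u φ z := by
  rw [rotM, ← Matrix.toLin'_apply, Matrix.toLin'_toMatrix']; rfl

lemma dot_transpose (A : Matrix (Fin 3) (Fin 3) ℝ) (x y : Fin 3 → ℝ) :
    (A *ᵥ x) ⬝ᵥ y = x ⬝ᵥ (Aᵀ *ᵥ y) := by
  simp [dotProduct, mulVec, Fin.sum_univ_three, transpose_apply]; ring

lemma dot_of_orth (A : Matrix (Fin 3) (Fin 3) ℝ) (horth : Aᵀ * A = 1) (x y : Fin 3 → ℝ) :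
    (A *ᵥ x) ⬝ᵥ (A *ᵥ y) = x ⬝ᵥ y := by
  rw [dot_transpose, Matrix.mulVec_mulVec, horth, Matrix.one_mulVec]

lemma orth_of_dot (A : Matrix (Fin 3) (Fin 3) ℝ)
    (h : ∀ x y, (A *ᵥ x) ⬝ᵥ (A *ᵥ y) = x ⬝ᵥ y) : Aᵀ * A = 1 := by
  ext i j
  have h2 := h (Pi.single i 1) (Pi.single j 1)
  simp only [Matrix.mulVec_single_one] at h2
  have lhs : (Aᵀ * A) i j = (fun k => A k i) ⬝ᵥ (fun k => A k j) := by
    simp [Matrix.mul_apply, dotProduct, Fin.sum_univ_three, transpose_apply]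
  rw [lhs, show ((fun k => A k i) ⬝ᵥ fun k => A k j) = A.col i ⬝ᵥ A.col j from rfl, h2]
  simp [dotProduct, Pi.single_apply, Matrix.one_apply, eq_comm]

lemma rotM_apply (u : Fin 3 → ℝ) (φ : ℝ) (i j : Fin 3) :
    rotM u φ i j = rotp u φ (Pi.single j 1) i := by
  rw [rotM, LinearMap.toMatrix'_apply]
  have h : (fun j' => if j' = j then (1:ℝ) else 0) = Pi.single j 1 := by
    funext k; simp [Pi.single_apply]
  rfl

lemma rotM_det (u : Fin 3 → ℝ) (φ : ℝ) :
    (rotM u φ).det = (Real.cos φ + (1 - Real.cos φ) * (u ⬝ᵥ u)) *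
      (Real.cos φ ^ 2 + Real.sin φ ^ 2 * (u ⬝ᵥ u)) := by
  rw [Matrix.det_fin_three]
  simp only [rotM_apply, rotp, cross_apply, dotProduct, Fin.sum_univ_three,
    Pi.add_apply, Pi.smul_apply, smul_eq_mul, Pi.single_apply]
  norm_num [Fin.ext_iff, Matrix.cons_val_two, Matrix.tail_cons, Matrix.head_cons]
  ring

lemma rotM_det_one (u : Fin 3 → ℝ) (hu : u ⬝ᵥ u = 1) (φ : ℝ) : (rotM u φ).det = 1 := by
  rw [rotM_det, hu]
  simp [sin_sq_add_cos_sq, cos_sq_add_sin_sq]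

lemma star_eq_transpose (A : Matrix (Fin 3) (Fin 3) ℝ) : star A = Aᵀ := by
  ext i j
  simp [Matrix.star_apply]

lemma rotM_mem (u : Fin 3 → ℝ) (hu : u ⬝ᵥ u = 1) (φ : ℝ) :
    rotM u φ ∈ Matrix.orthogonalGroup (Fin 3) ℝ := by
  rw [Matrix.mem_orthogonalGroup_iff']
  exact orth_of_dot _ (fun x y => by rw [rotM_mulVec, rotM_mulVec]; exact rotp_dot u hu φ x y)

lemma expand_basis (u w n : Fin 3 → ℝ) (huu : u⬝ᵥu=1) (hww : w⬝ᵥw=1) (hnn : n⬝ᵥn=1)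
    (huw : u⬝ᵥw=0) (hun : u⬝ᵥn=0) (hwn : w⬝ᵥn=0) (z : Fin 3 → ℝ) :
    z = (u⬝ᵥz)•u + (w⬝ᵥz)•w + (n⬝ᵥz)•n := by
  set M : Matrix (Fin 3) (Fin 3) ℝ := Matrix.of ![u, w, n] with hMdef
  have hM : M * Mᵀ = 1 := by
    ext i j
    simp only [dotProduct, Fin.sum_univ_three] at huu hww hnn huw hun hwn
    fin_cases i <;> fin_cases j <;>
      simp [hMdef, Matrix.mul_apply, Fin.sum_univ_three, Matrix.one_apply,
        Matrix.vecHead, Matrix.vecTail] <;>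
      first
        | linear_combination huu | linear_combination hww | linear_combination hnn
        | linear_combination huw | linear_combination hun | linear_combination hwn
  have hMT : Mᵀ * M = 1 := mul_eq_one_comm.mp hM
  have h1 : z = (Mᵀ * M) *ᵥ z := by rw [hMT, Matrix.one_mulVec]
  rw [← Matrix.mulVec_mulVec] at h1
  have h2 : Mᵀ *ᵥ (M *ᵥ z) = (u⬝ᵥz)•u + (w⬝ᵥz)•w + (n⬝ᵥz)•n := by
    funext j
    fin_cases j <;>
      simp [hMdef, Matrix.mulVec, dotProduct, Fin.sum_univ_three, Matrix.transpose_apply,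
        Matrix.vecHead, Matrix.vecTail] <;> ring
  exact h1.trans h2

lemma exists_cos_sin (a b : ℝ) (h : a^2 + b^2 = 1) : ∃ φ, Real.cos φ = a ∧ Real.sin φ = b := by
  have ha1 : -1 ≤ a := by nlinarith
  have ha2 : a ≤ 1 := by nlinarith
  have hs : Real.sin (Real.arccos a) = Real.sqrt (1 - a^2) := Real.sin_arccos a
  have hb : Real.sqrt (1 - a^2) = |b| := by
    rw [show (1:ℝ) - a^2 = b^2 by linarith, Real.sqrt_sq_eq_abs]
  rcases le_or_gt 0 b with hb0 | hb0
  · exact ⟨Real.arccos a, Real.cos_arccos ha1 ha2, by rw [hs, hb, abs_of_nonneg hb0]⟩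
  · refine ⟨-Real.arccos a, by rw [Real.cos_neg]; exact Real.cos_arccos ha1 ha2, ?_⟩
    rw [Real.sin_neg, hs, hb, abs_of_neg hb0, neg_neg]

lemma rows_mul_transpose (A : Matrix (Fin 3) (Fin 3) ℝ) (a b c : Fin 3 → ℝ) :
    Matrix.of ![A *ᵥ a, A *ᵥ b, A *ᵥ c] = Matrix.of ![a, b, c] * Aᵀ := by
  ext i j
  fin_cases i <;>
    simp [Matrix.mul_apply, Matrix.mulVec, dotProduct, Fin.sum_univ_three,
      Matrix.transpose_apply, Matrix.vecHead, Matrix.vecTail] <;> ring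

lemma cross_preserve (A : Matrix (Fin 3) (Fin 3) ℝ) (horth : Aᵀ * A = 1) (hdet : A.det = 1)
    (x y : Fin 3 → ℝ) : A *ᵥ (x ⨯₃ y) = (A *ᵥ x) ⨯₃ (A *ᵥ y) := by
  have hAAT : A * Aᵀ = 1 := mul_eq_one_comm.mp horth
  have key : ∀ z, (A *ᵥ (x ⨯₃ y)) ⬝ᵥ (A *ᵥ z) = ((A *ᵥ x) ⨯₃ (A *ᵥ y)) ⬝ᵥ (A *ᵥ z) := by
    intro z
    rw [dot_of_orth A horth]
    have h1 : ((A *ᵥ x) ⨯₃ (A *ᵥ y)) ⬝ᵥ (A *ᵥ z) = (A *ᵥ z) ⬝ᵥ ((A *ᵥ x) ⨯₃ (A *ᵥ y)) :=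
      dotProduct_comm _ _
    rw [h1, triple_product_eq_det, show ![A *ᵥ z, A *ᵥ x, A *ᵥ y] =
        Matrix.of ![A *ᵥ z, A *ᵥ x, A *ᵥ y] from rfl, rows_mul_transpose,
      Matrix.det_mul, Matrix.det_transpose, hdet, mul_one,
      show Matrix.of ![z, x, y] = ![z, x, y] from rfl, ← triple_product_eq_det,
      dotProduct_comm]
  set d := A *ᵥ (x ⨯₃ y) - (A *ᵥ x) ⨯₃ (A *ᵥ y) with hd
  have hz : d ⬝ᵥ (A *ᵥ (Aᵀ *ᵥ d)) = 0 := by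
    rw [sub_dotProduct] at *
    have := key (Aᵀ *ᵥ d); linarith [this]
  rw [Matrix.mulVec_mulVec, hAAT, Matrix.one_mulVec, dotProduct_self_eq_zero] at hz
  exact sub_eq_zero.mp hz

lemma fix_axis (u w : Fin 3 → ℝ) (hu : u⬝ᵥu = 1) (hw : w⬝ᵥw = 1) (huw : u⬝ᵥw = 0)
    (A : Matrix (Fin 3) (Fin 3) ℝ) (horth : Aᵀ * A = 1) (hdet : A.det = 1)
    (hfix : A *ᵥ u = u) : ∃ φ, ∀ z, A *ᵥ z = rotp u φ z := by
  set n := u ⨯₃ w with hn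
  have hnn : n ⬝ᵥ n = 1 := by
    rw [hn, cross_dot_cross, hu, hw, huw, dotProduct_comm w u, huw]; ring
  have hun : u ⬝ᵥ n = 0 := dot_self_cross u w
  have hwn : w ⬝ᵥ n = 0 := dot_cross_self u w
  have hucn : u ⨯₃ n = -w := by
    rw [hn, cross_cross_self, huw, hu]; simp
  set a := w ⬝ᵥ (A *ᵥ w) with ha
  set b := n ⬝ᵥ (A *ᵥ w) with hb
  have huAw : u ⬝ᵥ (A *ᵥ w) = 0 := by
    rw [← hfix, dot_of_orth A horth, huw]
  have hAw : A *ᵥ w = a • w + b • n := by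
    have := expand_basis u w n hu hw hnn huw hun hwn (A *ᵥ w)
    rw [huAw] at this; rw [this]; module
  have hab : a ^ 2 + b ^ 2 = 1 := by
    have h1 : (A *ᵥ w) ⬝ᵥ (A *ᵥ w) = 1 := by rw [dot_of_orth A horth, hw]
    rw [hAw] at h1
    simp only [add_dotProduct, dotProduct_add, smul_dotProduct, dotProduct_smul,
      smul_eq_mul] at h1
    rw [hw, hnn, hwn, dotProduct_comm n w, hwn] at h1
    nlinarith [h1]
  have hAn : A *ᵥ n = a • n - b • w := by
    rw [hn, cross_preserve A horth hdet, hfix, ← hn, hAw]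
    have : u ⨯₃ (a • w + b • n) = a • (u ⨯₃ w) + b • (u ⨯₃ n) := by
      simp [_root_.map_smul, map_add]
    rw [this, hucn, ← hn]
    module
  obtain ⟨φ, hc, hs⟩ := exists_cos_sin a b hab
  refine ⟨φ, fun z => ?_⟩
  have hru : rotp u φ u = u := by
    simp only [rotp, cross_self, hu]
    module
  have hrw : rotp u φ w = a • w + b • n := by
    simp only [rotp, ← hn, huw, hc, hs]
    module
  have hrn : rotp u φ n = a • n - b • w := by
    simp only [rotp, hucn, hun, hc, hs]
    module
  have hz := expand_basis u w n hu hw hnn huw hun hwn z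
  rw [hz]
  have hlin : ∀ (p q r : ℝ), A *ᵥ (p•u + q•w + r•n) =
      p • (A *ᵥ u) + q • (A *ᵥ w) + r • (A *ᵥ n) := by
    intro p q r
    simp [Matrix.mulVec_add, Matrix.mulVec_smul]
  have hlin2 : ∀ (p q r : ℝ), rotp u φ (p•u + q•w + r•n) =
      p • rotp u φ u + q • rotp u φ w + r • rotp u φ n := by
    intro p q r
    simp only [rotp, map_add, _root_.map_smul, dotProduct_add, dotProduct_smul, smul_eq_mul]
    match_scalars <;> ring
  rw [hlin, hlin2, hfix, hAw, hAn, hru, hrw, hrn]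

lemma circle_trans (u : Fin 3 → ℝ) (hu : u⬝ᵥu=1) (x y : Fin 3 → ℝ) (hx : x⬝ᵥx=1)
    (hy : y⬝ᵥy=1) (t : ℝ) (hxt : u⬝ᵥx = t) (hyt : u⬝ᵥy = t) : ∃ ψ, rotp u ψ x = y := by
  set p := x - t•u with hp
  set q := y - t•u with hq
  have hup : u⬝ᵥp = 0 := by rw [hp, dotProduct_sub, dotProduct_smul, hu, hxt]; simp
  have huq : u⬝ᵥq = 0 := by rw [hq, dotProduct_sub, dotProduct_smul, hu, hyt]; simp
  have hpp : p⬝ᵥp = 1 - t^2 := by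
    rw [hp]
    simp only [sub_dotProduct, dotProduct_sub, smul_dotProduct, dotProduct_smul, smul_eq_mul,
      hx, hu, hxt, dotProduct_comm x u, hxt]
    ring
  have hqq : q⬝ᵥq = 1 - t^2 := by
    rw [hq]
    simp only [sub_dotProduct, dotProduct_sub, smul_dotProduct, dotProduct_smul, smul_eq_mul,
      hy, hu, hyt, dotProduct_comm y u, hyt]
    ring
  have hxdecomp : x = t•u + p := by rw [hp]; module
  have hrot : ∀ ψ, rotp u ψ x = t•u + Real.cos ψ • p + Real.sin ψ • (u ⨯₃ p) := by
    intro ψ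
    rw [rotp, hxt]
    nth_rewrite 1 [hxdecomp]
    nth_rewrite 1 [hxdecomp]
    rw [map_add, _root_.map_smul, cross_self]
    module
  by_cases hm : 1 - t^2 = 0
  · have hp0 : p = 0 := by rw [← dotProduct_self_eq_zero, hpp, hm]
    have hq0 : q = 0 := by rw [← dotProduct_self_eq_zero, hqq, hm]
    refine ⟨0, ?_⟩
    rw [hrot 0, hp0]
    have hy' : y = t•u := by rw [← sub_eq_zero]; exact hq0
    rw [hy']; simp
  · have hmpos : 0 < 1 - t^2 :=
      lt_of_le_of_ne (by rw [← hpp]; exact dot_self_nonneg p) (Ne.symm hm)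
    set m := Real.sqrt (1 - t^2) with hmdef
    have hm2 : m^2 = 1 - t^2 := Real.sq_sqrt hmpos.le
    have hmne : m ≠ 0 := by positivity
    set ph := m⁻¹ • p with hph
    set n := u ⨯₃ ph with hn
    have hphph : ph ⬝ᵥ ph = 1 := by
      rw [hph]; simp only [smul_dotProduct, dotProduct_smul, smul_eq_mul, hpp]
      rw [← hm2]; field_simp
    have huph : u ⬝ᵥ ph = 0 := by rw [hph, dotProduct_smul, hup]; simp
    have hnn : n ⬝ᵥ n = 1 := by
      rw [hn, cross_dot_cross, hu, hphph, huph, dotProduct_comm ph u, huph]; ring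
    have hun : u ⬝ᵥ n = 0 := dot_self_cross u ph
    have hphn : ph ⬝ᵥ n = 0 := dot_cross_self u ph
    set a := ph ⬝ᵥ q with hadef
    set b := n ⬝ᵥ q with hbdef
    have hqdec : q = a • ph + b • n := by
      have := expand_basis u ph n hu hphph hnn huph hun hphn q
      rw [huq] at this; rw [this]; module
    have hab : (a/m)^2 + (b/m)^2 = 1 := by
      have h1 : q ⬝ᵥ q = a^2 + b^2 := by
        rw [hqdec]
        simp only [add_dotProduct, dotProduct_add, smul_dotProduct, dotProduct_smul, smul_eq_mul,
          hphph, hnn, hphn, dotProduct_comm n ph, hphn]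
        ring
      rw [hqq] at h1
      field_simp
      nlinarith [h1, hm2]
    obtain ⟨ψ, hc, hs⟩ := exists_cos_sin (a/m) (b/m) hab
    refine ⟨ψ, ?_⟩
    rw [hrot ψ, hc, hs]
    have hpph : p = m • ph := by rw [hph, smul_smul]; field_simp; rw [one_smul]
    have hcrossp : u ⨯₃ p = m • n := by
      rw [hpph, _root_.map_smul, hn]
    rw [hcrossp, hpph, smul_smul, smul_smul]
    have hy2 : y = t•u + q := by rw [hq]; module
    rw [hy2, hqdec]
    match_scalars <;> field_simp



lemma dot_le_one (u w : Fin 3 → ℝ) (hu : u⬝ᵥu=1) (hw : w⬝ᵥw=1) : u⬝ᵥw ≤ 1 := by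
  have h0 := dot_self_nonneg (u - w)
  simp only [sub_dotProduct, dotProduct_sub, hu, hw, dotProduct_comm w u] at h0
  linarith

lemma neg_one_le_dot (u w : Fin 3 → ℝ) (hu : u⬝ᵥu=1) (hw : w⬝ᵥw=1) : -1 ≤ u⬝ᵥw := by
  have h0 := dot_self_nonneg (u + w)
  simp only [add_dotProduct, dotProduct_add, hu, hw, dotProduct_comm w u] at h0
  linarith

lemma eq_of_dot_eq_one (u w : Fin 3 → ℝ) (hu : u⬝ᵥu=1) (hw : w⬝ᵥw=1)
    (h : u⬝ᵥw = 1) : w = u := by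
  have h3 : (w - u) ⬝ᵥ (w - u) = 0 := by
    simp only [sub_dotProduct, dotProduct_sub, hu, hw, h, dotProduct_comm w u]
    linarith
  have := dotProduct_self_eq_zero.mp h3
  rwa [sub_eq_zero] at this

lemma dot_sq_lt_one (u v : Fin 3 → ℝ) (hu : u⬝ᵥu=1) (hv : v⬝ᵥv=1)
    (h1 : v ≠ u) (h2 : v ≠ -u) : (u⬝ᵥv)^2 < 1 := by
  set c := u⬝ᵥv with hc
  have hval : (v - c•u) ⬝ᵥ (v - c•u) = 1 - c^2 := by
    simp only [sub_dotProduct, dotProduct_sub, smul_dotProduct, dotProduct_smul, smul_eq_mul,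
      hu, hv, ← hc, dotProduct_comm v u]
    ring
  have hvnz : v - c•u ≠ 0 := by
    intro h0
    have hveq : v = c • u := by rwa [sub_eq_zero] at h0
    have hcc : c * c = 1 := by
      have h2' := hv
      rw [hveq] at h2'
      simp only [smul_dotProduct, dotProduct_smul, smul_eq_mul, hu] at h2'
      linarith
    rcases mul_self_eq_one_iff.mp hcc with h3 | h3
    · exact h1 (by rw [hveq, h3, one_smul])
    · exact h2 (by rw [hveq, h3]; module)
  have hpos : 0 < (v - c•u) ⬝ᵥ (v - c•u) :=
    lt_of_le_of_ne (dot_self_nonneg _) (fun h => hvnz (dotProduct_self_eq_zero.mp h.symm))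
  linarith [hval]

lemma exists_perp (u v : Fin 3 → ℝ) (hu : u⬝ᵥu=1) (hv : v⬝ᵥv=1)
    (hlt : (u⬝ᵥv)^2 < 1) : ∃ e : Fin 3 → ℝ, e⬝ᵥe = 1 ∧ u⬝ᵥe = 0 := by
  set c := u⬝ᵥv with hc
  have hdenom : (0:ℝ) < 1 - c^2 := by linarith
  have hval : (v - c•u) ⬝ᵥ (v - c•u) = 1 - c^2 := by
    simp only [sub_dotProduct, dotProduct_sub, smul_dotProduct, dotProduct_smul, smul_eq_mul,
      hu, hv, ← hc, dotProduct_comm v u]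
    ring
  have hsq : Real.sqrt (1 - c^2) ^ 2 = 1 - c^2 := Real.sq_sqrt hdenom.le
  have hsne : Real.sqrt (1 - c^2) ≠ 0 := by positivity
  refine ⟨(Real.sqrt (1 - c^2))⁻¹ • (v - c•u), ?_, ?_⟩
  · simp only [smul_dotProduct, dotProduct_smul, smul_eq_mul, hval]
    rw [← hsq]; field_simp; try ring
    rw [Real.sqrt_sq (Real.sqrt_nonneg _)]
  · simp only [dotProduct_smul, dotProduct_sub, dotProduct_smul, smul_eq_mul, hu, ← hc]
    ring

lemma exists_e' (u : Fin 3 → ℝ) (hu : u⬝ᵥu=1) (e0 : Fin 3 → ℝ) (he0 : e0⬝ᵥe0=1)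
    (hue0 : u⬝ᵥe0=0) (w : Fin 3 → ℝ) (hw : w⬝ᵥw=1) :
    ∃ e : Fin 3 → ℝ, e⬝ᵥe=1 ∧ u⬝ᵥe=0 ∧ e⬝ᵥw = Real.sin (Real.arccos (u⬝ᵥw)) := by
  set t := u⬝ᵥw with htdef
  have ht1 : t ≤ 1 := dot_le_one u w hu hw
  have ht2 : -1 ≤ t := neg_one_le_dot u w hu hw
  have hsin : Real.sin (Real.arccos t) = Real.sqrt (1 - t^2) := Real.sin_arccos t
  set p := w - t • u with hpdef
  have hpp : p ⬝ᵥ p = 1 - t^2 := by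
    rw [hpdef]
    simp only [sub_dotProduct, dotProduct_sub, smul_dotProduct, dotProduct_smul, smul_eq_mul,
      hw, hu, ← htdef, dotProduct_comm w u]
    ring
  by_cases h0 : 1 - t^2 = 0
  · have hp0 : p = 0 := by rw [← dotProduct_self_eq_zero, hpp, h0]
    have hweq : w = t • u := by rw [← sub_eq_zero]; exact hp0
    refine ⟨e0, he0, hue0, ?_⟩
    rw [hweq, hsin, h0, Real.sqrt_zero, dotProduct_smul, dotProduct_comm e0 u, hue0]
    simp
  · have hmpos : 0 < 1 - t^2 :=
      lt_of_le_of_ne (by rw [← hpp]; exact dot_self_nonneg p) (Ne.symm h0)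
    have hsq' : Real.sqrt (1 - t^2) ^ 2 = 1 - t^2 := Real.sq_sqrt hmpos.le
    have hsne : Real.sqrt (1 - t^2) ≠ 0 := by positivity
    refine ⟨(Real.sqrt (1 - t^2))⁻¹ • p, ?_, ?_, ?_⟩
    · simp only [smul_dotProduct, dotProduct_smul, smul_eq_mul, hpp]
      rw [← hsq']; field_simp; try ring
      rw [Real.sqrt_sq (Real.sqrt_nonneg _)]
    · rw [dotProduct_smul, hpdef]
      simp only [dotProduct_sub, dotProduct_smul, smul_eq_mul, hu, ← htdef]
      ring_nf
    · have hpw : p ⬝ᵥ w = 1 - t^2 := by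
        rw [hpdef]
        simp only [sub_dotProduct, smul_dotProduct, smul_eq_mul, hw, ← htdef]
        ring
      rw [smul_dotProduct, hpw, hsin, ← hsq']
      field_simp
      rw [Real.sqrt_sq (Real.sqrt_nonneg _), smul_eq_mul]; field_simp

lemma interp (u e w : Fin 3 → ℝ) (hu : u⬝ᵥu=1) (he : e⬝ᵥe=1) (hue : u⬝ᵥe=0)
    (hw : w⬝ᵥw=1) (θ : ℝ) :
    ∃ w' : Fin 3 → ℝ, w'⬝ᵥw' = 1 ∧ u⬝ᵥw' = Real.cos θ ∧
      w'⬝ᵥw = Real.cos θ * (u⬝ᵥw) + Real.sin θ * (e⬝ᵥw) := by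
  refine ⟨Real.cos θ • u + Real.sin θ • e, ?_, ?_, ?_⟩
  · simp only [add_dotProduct, dotProduct_add, smul_dotProduct, dotProduct_smul, smul_eq_mul,
      hu, he, hue, dotProduct_comm e u]
    nlinarith [sin_sq_add_cos_sq θ]
  · simp only [dotProduct_add, dotProduct_smul, smul_eq_mul, hu, hue]
    ring
  · simp only [add_dotProduct, smul_dotProduct, smul_eq_mul]


end SO3aux

lemma rot_eq_rotp (a : EuclideanSpace ℝ (Fin 3)) (φ : ℝ) (x : EuclideanSpace ℝ (Fin 3)) :
    (rot a φ x : Fin 3 → ℝ) = SO3aux.rotp a φ x := by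
  simp only [rot, SO3aux.rotp, SO3aux.inner_eq_dot]; rfl

/-- The subgroup of SO(3) generated by all rotations about two non-collinear unit axes
`u` and `v` is all of SO(3). -/
theorem two_axes_generate_SO3 (u v : EuclideanSpace ℝ (Fin 3))
    (hu : ‖u‖ = 1) (hv : ‖v‖ = 1) (hne : v ≠ u) (hne' : v ≠ -u) :
    Subgroup.closure
        ({R : SO3 | ∃ φ : ℝ, ∀ z, R.1.1.mulVec z = rot u φ (WithLp.toLp 2 z)} ∪
         {R : SO3 | ∃ φ : ℝ, ∀ z, R.1.1.mulVec z = rot v φ (WithLp.toLp 2 z)}) = ⊤ := by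
  classical
  set S := ({R : SO3 | ∃ φ : ℝ, ∀ z, R.1.1.mulVec z = rot u φ (WithLp.toLp 2 z)} ∪
         {R : SO3 | ∃ φ : ℝ, ∀ z, R.1.1.mulVec z = rot v φ (WithLp.toLp 2 z)}) with hS
  have udot : (u : Fin 3 → ℝ) ⬝ᵥ (u : Fin 3 → ℝ) = 1 := by
    rw [← SO3aux.inner_eq_dot, real_inner_self_eq_norm_sq, hu]; norm_num
  have vdot : (v : Fin 3 → ℝ) ⬝ᵥ (v : Fin 3 → ℝ) = 1 := by
    rw [← SO3aux.inner_eq_dot, real_inner_self_eq_norm_sq, hv]; norm_num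
  have hc2 : ((u : Fin 3 → ℝ) ⬝ᵥ (v : Fin 3 → ℝ))^2 < 1 :=
    SO3aux.dot_sq_lt_one u v udot vdot (fun h => hne (WithLp.ofLp_injective 2 h))
      (fun h => hne' (WithLp.ofLp_injective 2 (by rw [WithLp.ofLp_neg]; exact h)))
  set c : ℝ := (u : Fin 3 → ℝ) ⬝ᵥ (v : Fin 3 → ℝ) with hcdef
  have hvu : (v : Fin 3 → ℝ) ⬝ᵥ (u : Fin 3 → ℝ) = c := by rw [hcdef, dotProduct_comm]
  have hdenom : (0:ℝ) < 1 - c^2 := by linarith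
  obtain ⟨e0, he0e0, hue0⟩ := SO3aux.exists_perp u v udot vdot hc2
  -- generator elements
  let Ru : ℝ → SO3 := fun φ =>
    ⟨⟨SO3aux.rotM u φ, SO3aux.rotM_mem u udot φ⟩, SO3aux.rotM_det_one u udot φ⟩
  let Rv : ℝ → SO3 := fun φ =>
    ⟨⟨SO3aux.rotM v φ, SO3aux.rotM_mem v vdot φ⟩, SO3aux.rotM_det_one v vdot φ⟩
  have hRuS : ∀ φ, Ru φ ∈ Subgroup.closure S := by
    intro φ
    apply Subgroup.subset_closure
    left
    exact ⟨φ, fun z => by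
      show SO3aux.rotM u φ *ᵥ z = (rot u φ (WithLp.toLp 2 z) : Fin 3 → ℝ)
      rw [SO3aux.rotM_mulVec, rot_eq_rotp, WithLp.ofLp_toLp]⟩
  have hRvS : ∀ φ, Rv φ ∈ Subgroup.closure S := by
    intro φ
    apply Subgroup.subset_closure
    right
    exact ⟨φ, fun z => by
      show SO3aux.rotM v φ *ᵥ z = (rot v φ (WithLp.toLp 2 z) : Fin 3 → ℝ)
      rw [SO3aux.rotM_mulVec, rot_eq_rotp, WithLp.ofLp_toLp]⟩
  have horthg : ∀ g : SO3, (g.1.1)ᵀ * g.1.1 = 1 := by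
    intro g
    have h := g.1.2.1
    rwa [SO3aux.star_eq_transpose] at h
  have horthg' : ∀ g : SO3, g.1.1 * (g.1.1)ᵀ = 1 :=
    fun g => mul_eq_one_comm.mp (horthg g)
  -- single step
  have step0 : ∀ w : Fin 3 → ℝ, w ⬝ᵥ w = 1 → 2*c^2 - 1 ≤ (u : Fin 3 → ℝ) ⬝ᵥ w →
      ∃ g : SO3, g ∈ Subgroup.closure S ∧ g.1.1 *ᵥ (u : Fin 3 → ℝ) = w := by
    intro w hw hwc
    set t := (u : Fin 3 → ℝ) ⬝ᵥ w with htdef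
    have ht1 : t ≤ 1 := SO3aux.dot_le_one u w udot hw
    set cv := (t - c^2)/(1 - c^2) with hcvdef
    have hcv1 : -1 ≤ cv := by
      rw [hcvdef, le_div_iff₀ hdenom]; nlinarith
    have hcv2 : cv ≤ 1 := by
      rw [hcvdef, div_le_one hdenom]; nlinarith
    set φ := Real.arccos cv with hφdef
    have hcos : Real.cos φ = cv := Real.cos_arccos hcv1 hcv2
    set x := SO3aux.rotp v φ u with hxdef
    have hx1 : x ⬝ᵥ x = 1 := by
      rw [hxdef, SO3aux.rotp_dot v vdot φ u u, udot]
    have htr : (u : Fin 3 → ℝ) ⬝ᵥ ((v : Fin 3 → ℝ) ⨯₃ (u : Fin 3 → ℝ)) = 0 := by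
      rw [triple_product_permutation]
      simp [cross_self]
    have hux : (u : Fin 3 → ℝ) ⬝ᵥ x = t := by
      rw [hxdef]
      simp only [SO3aux.rotp, dotProduct_add, dotProduct_smul, smul_eq_mul, udot, htr,
        hcos, hvu, ← hcdef]
      have hinv : (1 - c^2) * (1 - c^2)⁻¹ = 1 := mul_inv_cancel₀ hdenom.ne'
      rw [hcvdef]
      field_simp
      ring
    obtain ⟨ψ, hψ⟩ := SO3aux.circle_trans u udot x w hx1 hw t hux htdef.symm
    refine ⟨Ru ψ * Rv φ, mul_mem (hRuS ψ) (hRvS φ), ?_⟩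
    show (SO3aux.rotM u ψ * SO3aux.rotM v φ) *ᵥ (u : Fin 3 → ℝ) = w
    rw [← Matrix.mulVec_mulVec, SO3aux.rotM_mulVec, SO3aux.rotM_mulVec, ← hxdef, hψ]
  -- the angle step
  set β := Real.arccos (2*c^2 - 1) with hβdef
  have hβpos : 0 < β := Real.arccos_pos.mpr (by nlinarith)
  have hβπ : β ≤ π := Real.arccos_le_pi _
  have hcosβ : Real.cos β = 2*c^2 - 1 := Real.cos_arccos (by nlinarith) (by nlinarith)
  -- main induction
  have main : ∀ N : ℕ, ∀ w : Fin 3 → ℝ, w ⬝ᵥ w = 1 →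
      Real.arccos ((u : Fin 3 → ℝ) ⬝ᵥ w) ≤ N * β →
      ∃ g : SO3, g ∈ Subgroup.closure S ∧ g.1.1 *ᵥ (u : Fin 3 → ℝ) = w := by
    intro N
    induction N with
    | zero =>
      intro w hw hbound
      simp only [Nat.cast_zero, zero_mul] at hbound
      have h0 : Real.arccos ((u : Fin 3 → ℝ) ⬝ᵥ w) = 0 :=
        le_antisymm hbound (Real.arccos_nonneg _)
      have h1 : 1 ≤ (u : Fin 3 → ℝ) ⬝ᵥ w := Real.arccos_eq_zero.mp h0
      have heq : (u : Fin 3 → ℝ) ⬝ᵥ w = 1 :=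
        le_antisymm (SO3aux.dot_le_one u w udot hw) h1
      have hwu := SO3aux.eq_of_dot_eq_one u w udot hw heq
      refine ⟨1, Subgroup.one_mem _, ?_⟩
      show (1 : Matrix (Fin 3) (Fin 3) ℝ) *ᵥ (u : Fin 3 → ℝ) = w
      rw [Matrix.one_mulVec, hwu]
    | succ N ih =>
      intro w hw hbound
      set t := (u : Fin 3 → ℝ) ⬝ᵥ w with htdef
      have ht1 : t ≤ 1 := SO3aux.dot_le_one u w udot hw
      have ht2 : -1 ≤ t := SO3aux.neg_one_le_dot u w udot hw
      by_cases hcase : 2*c^2 - 1 ≤ t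
      · exact step0 w hw hcase
      · push_neg at hcase
        set α := Real.arccos t with hαdef
        have hα0 : 0 ≤ α := Real.arccos_nonneg t
        have hαπ : α ≤ π := Real.arccos_le_pi t
        have hcosα : Real.cos α = t := Real.cos_arccos ht2 ht1
        have hβα : β ≤ α := by
          by_contra hlt
          push_neg at hlt
          have hmono := Real.strictAntiOn_cos ⟨hα0, hαπ⟩
            ⟨Real.arccos_nonneg _, hβπ⟩ hlt
          rw [hcosα, hcosβ] at hmono
          linarith
        obtain ⟨e, hee, hue, hew⟩ := SO3aux.exists_e' u udot e0 he0e0 hue0 w hw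
        obtain ⟨w', hw'1, huw', hw'w0⟩ := SO3aux.interp u e w udot hee hue hw (α - β)
        have hαβ0 : 0 ≤ α - β := by linarith
        have hαβπ : α - β ≤ π := by linarith
        have harc : Real.arccos ((u : Fin 3 → ℝ) ⬝ᵥ w') ≤ N * β := by
          rw [huw', Real.arccos_cos hαβ0 hαβπ]
          have hNb : α ≤ (N + 1 : ℕ) * β := hbound
          push_cast at hNb
          linarith
        obtain ⟨g', hg'mem, hg'u⟩ := ih w' hw'1 harc
        have hw'w : w' ⬝ᵥ w = 2*c^2 - 1 := by
          rw [hw'w0, hew, ← htdef, ← hαdef, ← hcosα, ← Real.cos_sub,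
            show (α - β) - α = -β by ring, Real.cos_neg, hcosβ]
        set A := g'.1.1 with hAdef
        set x := Aᵀ *ᵥ w with hxdef
        have hATorth : (Aᵀ)ᵀ * Aᵀ = 1 := by
          rw [Matrix.transpose_transpose]; exact horthg' g'
        have hx1 : x ⬝ᵥ x = 1 := by
          rw [hxdef, SO3aux.dot_of_orth Aᵀ hATorth, hw]
        have hux : (u : Fin 3 → ℝ) ⬝ᵥ x = 2*c^2 - 1 := by
          rw [hxdef, ← SO3aux.dot_transpose, hg'u, hw'w]
        obtain ⟨h, hhmem, hhu⟩ := step0 x hx1 (le_of_eq hux.symm)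
        refine ⟨g' * h, mul_mem hg'mem hhmem, ?_⟩
        show (A * h.1.1) *ᵥ (u : Fin 3 → ℝ) = w
        rw [← Matrix.mulVec_mulVec, hhu, hxdef, Matrix.mulVec_mulVec, horthg' g',
          Matrix.one_mulVec]
  -- final assembly
  rw [eq_top_iff]
  intro R _
  set w := R.1.1 *ᵥ (u : Fin 3 → ℝ) with hwdef
  have hw1 : w ⬝ᵥ w = 1 := by
    rw [hwdef, SO3aux.dot_of_orth _ (horthg R), udot]
  obtain ⟨Nr, hNr⟩ := exists_nat_ge (π / β)
  have hNβ : π ≤ Nr * β := by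
    rw [div_le_iff₀ hβpos] at hNr
    linarith
  obtain ⟨g, hgmem, hgu⟩ := main Nr w hw1 (le_trans (Real.arccos_le_pi _) hNβ)
  have hBfix : (g⁻¹ * R).1.1 *ᵥ (u : Fin 3 → ℝ) = u := by
    show (star g.1.1 * R.1.1) *ᵥ (u : Fin 3 → ℝ) = u
    rw [SO3aux.star_eq_transpose, ← Matrix.mulVec_mulVec, ← hwdef, ← hgu,
      Matrix.mulVec_mulVec, horthg g, Matrix.one_mulVec]
  have hBdet : ((g⁻¹ * R).1.1).det = 1 := (g⁻¹ * R).2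
  obtain ⟨φ, hφ⟩ := SO3aux.fix_axis u e0 udot he0e0 hue0 (g⁻¹ * R).1.1
    (horthg (g⁻¹ * R)) hBdet hBfix
  have hBinS : (g⁻¹ * R) ∈ S := by
    left
    exact ⟨φ, fun z => by rw [rot_eq_rotp, WithLp.ofLp_toLp]; exact hφ z⟩
  have hfin : R = g * (g⁻¹ * R) := by group
  rw [hfin]
  exact mul_mem hgmem (Subgroup.subset_closure hBinS)
end
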